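/- Let K = 2^m. If S is a finite multiset of powers of 2, each at most K, with total sum at least K, then there exists a sub-multiset S' of S whose sum is exactly K. -/

import Mathlib

lemma aux_pow2 : ∀ (m : ℕ) (S : Multiset ℕ),
    (∀ x ∈ S, (∃ a : ℕ, x = 2 ^ a) ∧ x ≤ 2 ^ m) → 2 ^ m ≤ S.sum →
    ∃ S' : Multiset ℕ, S' ≤ S ∧ S'.sum = 2 ^ m := by
  intro m
  induction m with
  | zero =>
    intro S hpow hsum
    have hne : S ≠ 0 := by
      intro h; simp [h] at hsum
    obtain ⟨x, hx⟩ := Multiset.exists_mem_of_ne_zero hne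
    obtain ⟨⟨a, ha⟩, hle⟩ := hpow x hx
    have hx1 : x = 1 := by
      have : 1 ≤ x := by rw [ha]; exact Nat.one_le_two_pow
      omega
    exact ⟨{x}, Multiset.singleton_le.mpr hx, by simp [hx1]⟩
  | succ m ih =>
    intro S hpow hsum
    by_cases hbig : ∃ x ∈ S, x = 2 ^ (m + 1)
    · obtain ⟨x, hx, hxe⟩ := hbig
      exact ⟨{x}, Multiset.singleton_le.mpr hx, by simp [hxe]⟩
    · push_neg at hbig
      have hsmall : ∀ x ∈ S, (∃ a : ℕ, x = 2 ^ a) ∧ x ≤ 2 ^ m := by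
        intro x hx
        obtain ⟨⟨a, ha⟩, hle⟩ := hpow x hx
        refine ⟨⟨a, ha⟩, ?_⟩
        have hne := hbig x hx
        have ham : a ≤ m := by
          by_contra h
          push_neg at h
          have : 2 ^ (m + 1) ≤ 2 ^ a := Nat.pow_le_pow_right (by norm_num) h
          omega
        rw [ha]
        exact Nat.pow_le_pow_right (by norm_num) ham
      have h1 : 2 ^ m ≤ S.sum := le_trans (Nat.pow_le_pow_right (by norm_num) (Nat.le_succ m)) hsum
      obtain ⟨S₁, hS₁le, hS₁sum⟩ := ih S hsmall h1
      obtain ⟨T, rfl⟩ := Multiset.le_iff_exists_add.mp hS₁le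
      have hTsum : 2 ^ m ≤ T.sum := by
        have := hsum
        rw [Multiset.sum_add, hS₁sum, pow_succ] at this
        omega
      have hTsmall : ∀ x ∈ T, (∃ a : ℕ, x = 2 ^ a) ∧ x ≤ 2 ^ m := fun x hx =>
        hsmall x (Multiset.mem_add.mpr (Or.inr hx))
      obtain ⟨S₂, hS₂le, hS₂sum⟩ := ih T hTsmall hTsum
      refine ⟨S₁ + S₂, add_le_add (le_refl S₁) hS₂le, ?_⟩
      rw [Multiset.sum_add, hS₁sum, hS₂sum, pow_succ]
      omega

theorem stmt_1 (m K : ℕ) (hK : K = 2 ^ m) (S : Multiset ℕ)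
    (hpow : ∀ x ∈ S, (∃ a : ℕ, x = 2 ^ a) ∧ x ≤ K)
    (hsum : K ≤ S.sum) :
    ∃ S' : Multiset ℕ, S' ≤ S ∧ S'.sum = K := by
  subst hK
  exact aux_pow2 m S hpow hsum
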